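/- In the dihedral group D_{2n} with n = 5k−2 for an odd integer k ≥ 3, the set S = {x^k, x^{k+2}, …, x^{3k−2}} ∪ {y, xy, …, x^{k−1}y} is a locally maximal product-free set, and x^{3k} ∉ S ∪ SS, so S does not fill D_{2n}. -/
import Mathlib

open Pointwise

/-- `S` is product-free if `S ∩ SS = ∅`. -/
def ProductFree {G : Type*} [Group G] (S : Set G) : Prop :=
  Disjoint S (S * S)

/-- `S` is locally maximal product-free if it is product-free and not properly
contained in any product-free set. -/
def LocallyMaximalPF {G : Type*} [Group G] (S : Set G) : Prop :=
  ProductFree S ∧ ∀ T : Set G, ProductFree T → S ⊆ T → S = T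

/-- `S` fills `G` (is complete) if every non-identity element lies in `S ∪ SS`. -/
def Fills {G : Type*} [Group G] (S : Set G) : Prop :=
  ∀ g : G, g ≠ 1 → g ∈ S ∪ S * S

/-- `G` is filled if every locally maximal product-free set fills `G`. -/
def Filled (G : Type*) [Group G] : Prop :=
  ∀ S : Set G, LocallyMaximalPF S → Fills S

section helpers
variable {n : ℕ} [NeZero n]

lemma castInj {x y : ℕ} (hx : x < n) (hy : y < n) (h : (x : ZMod n) = y) : x = y := by
  have := congrArg ZMod.val h
  rwa [ZMod.val_cast_of_lt hx, ZMod.val_cast_of_lt hy] at this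

lemma rInj {x y : ℕ} (hx : x < n) (hy : y < n)
    (h : DihedralGroup.r (x : ZMod n) = DihedralGroup.r (y : ZMod n)) : x = y := by
  apply castInj hx hy
  injection h

lemma castWrap {x : ℕ} (hx : n ≤ x) : ((x : ℕ) : ZMod n) = ((x - n : ℕ) : ZMod n) := by
  conv_lhs => rw [show x = (x - n) + n by omega]
  push_cast [ZMod.natCast_self]
  ring

lemma castSub (i j : ℕ) (h : i ≤ n + j) :
    ((j : ℕ) : ZMod n) - ((i : ℕ) : ZMod n) = ((n + j - i : ℕ) : ZMod n) := by
  have h2 : (((n + j - i) + i : ℕ) : ZMod n) = ((n + j : ℕ) : ZMod n) := by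
    rw [show (n + j - i) + i = n + j by omega]
  push_cast [ZMod.natCast_self] at h2
  rw [zero_add] at h2
  linear_combination -h2

lemma castVal (a : ZMod n) : ((a.val : ℕ) : ZMod n) = a :=
  (ZMod.natCast_val a).trans (ZMod.cast_id n a)

end helpers

theorem auxD (k m n : ℕ) (hm : k = 2 * m + 1) (h3 : 3 ≤ k) (hn : n = 5 * k - 2)
    (S : Set (DihedralGroup n))
    (hS : S = {g | ∃ i < k, g = DihedralGroup.r ((k + 2 * i : ℕ) : ZMod n)} ∪
        {g | ∃ i < k, g = DihedralGroup.sr ((i : ℕ) : ZMod n)}) :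
    LocallyMaximalPF S ∧
      DihedralGroup.r ((3 * k : ℕ) : ZMod n) ∉ S ∪ S * S ∧ ¬ Fills S := by
  subst hS
  haveI : NeZero n := ⟨by omega⟩
  have hn13 : 13 ≤ n := by omega
  -- membership characterizations
  have memS_r : ∀ e : ℕ, e < n →
      (DihedralGroup.r (e : ZMod n) ∈
        ({g | ∃ i < k, g = DihedralGroup.r ((k + 2 * i : ℕ) : ZMod n)} ∪
        {g | ∃ i < k, g = DihedralGroup.sr ((i : ℕ) : ZMod n)} : Set (DihedralGroup n))
        ↔ (k ≤ e ∧ e ≤ 3 * k - 2 ∧ e % 2 = 1)) := by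
    intro e he
    constructor
    · rintro (⟨i, hi, heq⟩ | ⟨i, hi, heq⟩)
      · have := rInj he (by omega) heq
        omega
      · exact absurd heq (by simp)
    · rintro ⟨h1, h2, h3'⟩
      left
      refine ⟨(e - k) / 2, by omega, ?_⟩
      rw [show k + 2 * ((e - k) / 2) = e by omega]
  have memS_sr : ∀ e : ℕ, e < n →
      (DihedralGroup.sr (e : ZMod n) ∈
        ({g | ∃ i < k, g = DihedralGroup.r ((k + 2 * i : ℕ) : ZMod n)} ∪
        {g | ∃ i < k, g = DihedralGroup.sr ((i : ℕ) : ZMod n)} : Set (DihedralGroup n))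
        ↔ e < k) := by
    intro e he
    constructor
    · rintro (⟨i, hi, heq⟩ | ⟨i, hi, heq⟩)
      · exact absurd heq (by simp)
      · have heq2 : (e : ZMod n) = (i : ℕ) := by injection heq
        have := castInj he (by omega) heq2
        omega
    · intro h1
      exact Or.inr ⟨e, h1, rfl⟩
  set S : Set (DihedralGroup n) :=
    {g | ∃ i < k, g = DihedralGroup.r ((k + 2 * i : ℕ) : ZMod n)} ∪
      {g | ∃ i < k, g = DihedralGroup.sr ((i : ℕ) : ZMod n)} with hSdef
  -- product-freeness
  have hPF : ProductFree S := by
    rw [ProductFree, Set.disjoint_left]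
    rintro g hg ⟨u, hu, v, hv, rfl⟩
    dsimp only at hg
    rcases hu with ⟨i, hi, rfl⟩ | ⟨i, hi, rfl⟩ <;>
      rcases hv with ⟨j, hj, rfl⟩ | ⟨j, hj, rfl⟩
    · rw [DihedralGroup.r_mul_r, ← Nat.cast_add] at hg
      by_cases hs : (k + 2 * i) + (k + 2 * j) < n
      · rw [memS_r _ hs] at hg; omega
      · rw [castWrap (by omega)] at hg
        rw [memS_r _ (by omega)] at hg; omega
    · rw [DihedralGroup.r_mul_sr, castSub _ _ (by omega)] at hg
      rw [memS_sr _ (by omega)] at hg; omega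
    · rw [DihedralGroup.sr_mul_r, ← Nat.cast_add] at hg
      rw [memS_sr _ (by omega)] at hg; omega
    · rw [DihedralGroup.sr_mul_sr, castSub _ _ (by omega)] at hg
      by_cases hs : n + j - i < n
      · rw [memS_r _ hs] at hg; omega
      · rw [castWrap (by omega)] at hg
        rw [memS_r _ (by omega)] at hg; omega
  -- r^(3k) is not in S ∪ S*S
  have hnotin : DihedralGroup.r ((3 * k : ℕ) : ZMod n) ∉ S ∪ S * S := by
    rintro (h | ⟨u, hu, v, hv, huv⟩)
    · rw [memS_r _ (by omega)] at h; omega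
    · dsimp only at huv
      rcases hu with ⟨i, hi, rfl⟩ | ⟨i, hi, rfl⟩ <;>
        rcases hv with ⟨j, hj, rfl⟩ | ⟨j, hj, rfl⟩
      · rw [DihedralGroup.r_mul_r, ← Nat.cast_add] at huv
        by_cases hs : (k + 2 * i) + (k + 2 * j) < n
        · have := rInj hs (by omega) huv; omega
        · rw [castWrap (by omega)] at huv
          have := rInj (by omega) (by omega) huv; omega
      · rw [DihedralGroup.r_mul_sr] at huv
        exact absurd huv (by simp)
      · rw [DihedralGroup.sr_mul_r] at huv
        exact absurd huv (by simp)
      · rw [DihedralGroup.sr_mul_sr, castSub _ _ (by omega)] at huv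
        by_cases hs : n + j - i < n
        · have := rInj hs (by omega) huv; omega
        · rw [castWrap (by omega)] at huv
          have := rInj (by omega) (by omega) huv; omega
  -- local maximality
  have hmax : ∀ T : Set (DihedralGroup n), ProductFree T → S ⊆ T → S = T := by
    intro T hT hST
    refine Set.Subset.antisymm hST fun g hgT => ?_
    by_contra hgS
    have hTd := Set.disjoint_left.mp hT
    -- handy S-members
    have hk_mem : DihedralGroup.r ((k : ℕ) : ZMod n) ∈ S :=
      (memS_r k (by omega)).mpr ⟨le_refl k, by omega, by omega⟩
    cases g with
    | r a =>
      set e := a.val with he_def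
      have he : e < n := a.val_lt
      have hge : DihedralGroup.r ((e : ℕ) : ZMod n) = DihedralGroup.r a := by rw [castVal]
      have hgT' : DihedralGroup.r ((e : ℕ) : ZMod n) ∈ T := by rwa [hge]
      have hgS' : DihedralGroup.r ((e : ℕ) : ZMod n) ∉ S := by rwa [hge]
      have hnotS : ¬(k ≤ e ∧ e ≤ 3 * k - 2 ∧ e % 2 = 1) := fun h => hgS' ((memS_r e he).mpr h)
      rcases Nat.lt_or_ge e k with hA | h1
      · -- e < k : g = sr 0 * sr e ∈ T*T
        have h0 : DihedralGroup.sr ((0 : ℕ) : ZMod n) ∈ S := (memS_sr 0 (by omega)).mpr (by omega)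
        have hes : DihedralGroup.sr ((e : ℕ) : ZMod n) ∈ S := (memS_sr e he).mpr hA
        have hmm := Set.mul_mem_mul (hST h0) (hST hes)
        rw [DihedralGroup.sr_mul_sr, castSub _ _ (by omega), castWrap (by omega),
          show n + e - 0 - n = e by omega] at hmm
        exact hTd hgT' hmm
      · rcases Nat.lt_or_ge e (2 * k) with h2 | h2
        · -- k ≤ e < 2k, e must be even; r k * g = r (k+e) ∈ S
          have heven : e % 2 = 0 := by omega
          have hmm := Set.mul_mem_mul (hST hk_mem) hgT'
          rw [DihedralGroup.r_mul_r, ← Nat.cast_add] at hmm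
          have hin : DihedralGroup.r ((k + e : ℕ) : ZMod n) ∈ S :=
            (memS_r (k + e) (by omega)).mpr ⟨by omega, by omega, by omega⟩
          exact hTd (hST hin) hmm
        · rcases Nat.lt_or_ge e (4 * k - 1) with h4 | h4
          · rcases Nat.mod_two_eq_zero_or_one e with hp | hp
            · -- 2k ≤ e ≤ 4k-2 even : g = r k * r (e-k)
              have hek : DihedralGroup.r ((e - k : ℕ) : ZMod n) ∈ S :=
                (memS_r (e - k) (by omega)).mpr ⟨by omega, by omega, by omega⟩
              have hmm := Set.mul_mem_mul (hST hk_mem) (hST hek)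
              rw [DihedralGroup.r_mul_r, ← Nat.cast_add,
                show k + (e - k) = e by omega] at hmm
              exact hTd hgT' hmm
            · -- odd, so 3k ≤ e ≤ 4k-2 : r (6k-2-e) * g = r k
              have h3k : 3 * k ≤ e := by omega
              have hw : DihedralGroup.r ((6 * k - 2 - e : ℕ) : ZMod n) ∈ S :=
                (memS_r (6 * k - 2 - e) (by omega)).mpr ⟨by omega, by omega, by omega⟩
              have hmm := Set.mul_mem_mul (hST hw) hgT'
              rw [DihedralGroup.r_mul_r, ← Nat.cast_add,
                show (6 * k - 2 - e) + e = 6 * k - 2 by omega,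
                castWrap (by omega), show 6 * k - 2 - n = k by omega] at hmm
              exact hTd (hST hk_mem) hmm
          · -- 4k-1 ≤ e ≤ n-1 : g = sr (n-e) * sr 0
            have h0 : DihedralGroup.sr ((0 : ℕ) : ZMod n) ∈ S := (memS_sr 0 (by omega)).mpr (by omega)
            have hw : DihedralGroup.sr ((n - e : ℕ) : ZMod n) ∈ S :=
              (memS_sr (n - e) (by omega)).mpr (by omega)
            have hmm := Set.mul_mem_mul (hST hw) (hST h0)
            rw [DihedralGroup.sr_mul_sr, castSub _ _ (by omega),
              show n + 0 - (n - e) = e by omega] at hmm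
            exact hTd hgT' hmm
    | sr a =>
      set e := a.val with he_def
      have he : e < n := a.val_lt
      have hge : DihedralGroup.sr ((e : ℕ) : ZMod n) = DihedralGroup.sr a := by rw [castVal]
      have hgT' : DihedralGroup.sr ((e : ℕ) : ZMod n) ∈ T := by rwa [hge]
      have hgS' : DihedralGroup.sr ((e : ℕ) : ZMod n) ∉ S := by rwa [hge]
      have h1 : k ≤ e := by
        by_contra h; exact hgS' ((memS_sr e he).mpr (by omega))
      rcases Nat.lt_or_ge e (3 * k) with h2 | h2
      · -- k ≤ e ≤ 3k-1 : g = sr j * r (e-j), j ∈ {0,1}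
        rcases Nat.mod_two_eq_zero_or_one e with hp | hp
        · have hj : DihedralGroup.sr ((1 : ℕ) : ZMod n) ∈ S := (memS_sr 1 (by omega)).mpr (by omega)
          have hr : DihedralGroup.r ((e - 1 : ℕ) : ZMod n) ∈ S :=
            (memS_r (e - 1) (by omega)).mpr ⟨by omega, by omega, by omega⟩
          have hmm := Set.mul_mem_mul (hST hj) (hST hr)
          rw [DihedralGroup.sr_mul_r, ← Nat.cast_add, show 1 + (e - 1) = e by omega] at hmm
          exact hTd hgT' hmm
        · have hj : DihedralGroup.sr ((0 : ℕ) : ZMod n) ∈ S := (memS_sr 0 (by omega)).mpr (by omega)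
          have hr : DihedralGroup.r ((e : ℕ) : ZMod n) ∈ S :=
            (memS_r e he).mpr ⟨by omega, by omega, by omega⟩
          have hmm := Set.mul_mem_mul (hST hj) (hST hr)
          rw [DihedralGroup.sr_mul_r, ← Nat.cast_add, show 0 + e = e by omega] at hmm
          exact hTd hgT' hmm
      · rcases Nat.lt_or_ge e (4 * k - 2) with h4 | h4
        · -- 3k ≤ e ≤ 4k-3 : g = sr (e-3k+2) * r (3k-2)
          have hj : DihedralGroup.sr ((e - (3 * k - 2) : ℕ) : ZMod n) ∈ S :=
            (memS_sr (e - (3 * k - 2)) (by omega)).mpr (by omega)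
          have hr : DihedralGroup.r ((3 * k - 2 : ℕ) : ZMod n) ∈ S :=
            (memS_r (3 * k - 2) (by omega)).mpr ⟨by omega, by omega, by omega⟩
          have hmm := Set.mul_mem_mul (hST hj) (hST hr)
          rw [DihedralGroup.sr_mul_r, ← Nat.cast_add,
            show (e - (3 * k - 2)) + (3 * k - 2) = e by omega] at hmm
          exact hTd hgT' hmm
        · -- 4k-2 ≤ e ≤ n-1 : g = r k * sr (e-4k+2)
          have hj : DihedralGroup.sr ((e - (4 * k - 2) : ℕ) : ZMod n) ∈ S :=
            (memS_sr (e - (4 * k - 2)) (by omega)).mpr (by omega)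
          have hmm := Set.mul_mem_mul (hST hk_mem) (hST hj)
          rw [DihedralGroup.r_mul_sr, castSub _ _ (by omega),
            show n + (e - (4 * k - 2)) - k = e by omega] at hmm
          exact hTd hgT' hmm
  refine ⟨⟨hPF, hmax⟩, hnotin, fun hfill => ?_⟩
  apply hnotin
  apply hfill
  rw [DihedralGroup.one_def]
  intro h
  have h0 : DihedralGroup.r ((3 * k : ℕ) : ZMod n) = DihedralGroup.r ((0 : ℕ) : ZMod n) := by
    rw [h]; norm_num
  have h1 := rInj (show 3 * k < n by omega) (show 0 < n by omega) h0
  omega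

theorem dihedral_5k_sub_2 (k : ℕ) (hk : Odd k) (h3 : 3 ≤ k) :
    let n := 5 * k - 2
    let S : Set (DihedralGroup n) :=
      {g | ∃ i < k, g = DihedralGroup.r ((k + 2 * i : ℕ) : ZMod n)} ∪
        {g | ∃ i < k, g = DihedralGroup.sr ((i : ℕ) : ZMod n)}
    LocallyMaximalPF S ∧
      DihedralGroup.r ((3 * k : ℕ) : ZMod n) ∉ S ∪ S * S ∧ ¬ Fills S := by
  intro n S
  obtain ⟨m, hm⟩ := hk
  exact auxD k m n (by omega) h3 rfl S rfl
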